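/- Let d ≥ 2 and k ≥ d/2, and suppose V is a k-dimensional affine subspace of ℝ^d meeting [0,1]^d. Then V intersects at least one of the sets S = {x ∈ [0,1]^d : |{i ≤ d : x_i ∈ [0,1/20] ∪ [19/20,1]}| ≥ k+1} or T = {x ∈ [1/20,19/20]^d : |{i ≤ d : x_i ∈ [8/20,14/20]}| ≤ k}. -/

import Mathlib

open Set Module

/-- The unit cube `[0,1]^d`. -/
def unitCube (d : ℕ) : Set (EuclideanSpace ℝ (Fin d)) :=
  {x | ∀ i, x i ∈ Set.Icc (0 : ℝ) 1}

open scoped Classical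

/-- Vertex lemma: from any point of `V ∩ [0,1]^d` we can reach a point `y` such that
no nonzero direction vector of `V` vanishes on all tight coordinates of `y`. -/
lemma exists_vertex_aux {d : ℕ} (V : AffineSubspace ℝ (EuclideanSpace ℝ (Fin d))) :
    ∀ n : ℕ, ∀ x, x ∈ V → x ∈ unitCube d →
      ((Finset.univ.filter (fun i => x i = 0 ∨ x i = 1))ᶜ).card ≤ n →
    ∃ y, y ∈ V ∧ y ∈ unitCube d ∧
      ∀ w ∈ V.direction, (∀ i, (y i = 0 ∨ y i = 1) → w i = 0) → w = 0 := by
  intro n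
  induction n with
  | zero =>
    intro x hxV hxc hcard
    refine ⟨x, hxV, hxc, ?_⟩
    intro w _ hw
    have hall : ∀ i, x i = 0 ∨ x i = 1 := by
      intro i
      by_contra hi
      have : i ∈ (Finset.univ.filter (fun i => x i = 0 ∨ x i = 1))ᶜ := by
        simp only [Finset.mem_compl, Finset.mem_filter, Finset.mem_univ, true_and]
        exact hi
      have := Finset.card_pos.mpr ⟨i, this⟩
      omega
    ext i
    exact hw i (hall i)
  | succ n ih =>
    intro x hxV hxc hcard
    by_cases hvert : ∀ w ∈ V.direction, (∀ i, (x i = 0 ∨ x i = 1) → w i = 0) → w = 0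
    · exact ⟨x, hxV, hxc, hvert⟩
    push_neg at hvert
    obtain ⟨w, hwdir, hwz, hwne⟩ := hvert
    have hj : ∃ j, w j ≠ 0 := by
      by_contra h
      push_neg at h
      exact hwne (by ext i; exact h i)
    obtain ⟨j, hj⟩ := hj
    set F : Finset (Fin d) := Finset.univ.filter (fun j => w j ≠ 0) with hF
    have hFne : F.Nonempty := ⟨j, by simp [hF, hj]⟩
    have hFopen : ∀ i ∈ F, 0 < x i ∧ x i < 1 := by
      intro i hi
      have hwi : w i ≠ 0 := by simpa [hF] using hi
      have hnt : ¬ (x i = 0 ∨ x i = 1) := fun h => hwi (hwz i h)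
      push_neg at hnt
      have := hxc i
      constructor
      · exact lt_of_le_of_ne this.1 (Ne.symm hnt.1)
      · exact lt_of_le_of_ne this.2 hnt.2
    set q : Fin d → ℝ := fun i => if 0 < w i then (1 - x i) / w i else (0 - x i) / w i with hq
    set s : ℝ := F.inf' hFne q with hs
    have hq0 : ∀ i ∈ F, 0 ≤ q i := by
      intro i hi
      have hwi : w i ≠ 0 := by simpa [hF] using hi
      obtain ⟨h0, h1⟩ := hFopen i hi
      by_cases hpos : 0 < w i
      · simp only [hq, if_pos hpos]
        exact div_nonneg (by linarith) hpos.le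
      · have hneg : w i < 0 := lt_of_le_of_ne (not_lt.mp hpos) hwi
        simp only [hq, if_neg hpos]
        rw [div_nonneg_iff]
        right
        constructor <;> nlinarith
    have hs0 : 0 ≤ s := Finset.le_inf' hFne q hq0
    set y : EuclideanSpace ℝ (Fin d) := x + s • w with hy
    have hyi : ∀ i, y i = x i + s * w i := fun i => rfl
    have hyV : y ∈ V := by
      have : y = (s • w) +ᵥ x := by
        simp [hy, vadd_eq_add, add_comm]
      rw [this]
      exact AffineSubspace.vadd_mem_of_mem_direction (Submodule.smul_mem _ _ hwdir) hxV
    -- coordinates bounds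
    have hbound : ∀ i ∈ F, (0:ℝ) ≤ y i ∧ y i ≤ 1 := by
      intro i hi
      have hwi : w i ≠ 0 := by simpa [hF] using hi
      obtain ⟨h0, h1⟩ := hFopen i hi
      have hsq : s ≤ q i := Finset.inf'_le q hi
      rw [hyi]
      by_cases hpos : 0 < w i
      · constructor
        · nlinarith
        · have : s * w i ≤ q i * w i := by nlinarith
          have hqi : q i * w i = 1 - x i := by
            simp only [hq, if_pos hpos]
            field_simp
          nlinarith
      · have hneg : w i < 0 := lt_of_le_of_ne (not_lt.mp hpos) hwi
        constructor
        · have : q i * w i ≤ s * w i := by nlinarith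
          have hqi : q i * w i = 0 - x i := by
            simp only [hq, if_neg hpos]
            field_simp
          nlinarith
        · nlinarith
    have hyc : y ∈ unitCube d := by
      intro i
      by_cases hwi : w i = 0
      · have : y i = x i := by rw [hyi, hwi]; ring
        rw [this]; exact hxc i
      · exact hbound i (by simp [hF, hwi])
    -- the tight set strictly grows
    obtain ⟨j₀, hj₀F, hj₀⟩ := Finset.exists_mem_eq_inf' hFne q
    have hwj₀ : w j₀ ≠ 0 := by simpa [hF] using hj₀F
    have hj₀tight : y j₀ = 0 ∨ y j₀ = 1 := by
      rw [hyi, hs, hj₀]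
      by_cases hpos : 0 < w j₀
      · right
        simp only [hq, if_pos hpos]
        field_simp
        ring
      · left
        simp only [hq, if_neg hpos]
        field_simp
        ring
    have hj₀nt : ¬ (x j₀ = 0 ∨ x j₀ = 1) := by
      obtain ⟨h0, h1⟩ := hFopen j₀ hj₀F
      push_neg
      constructor <;> intro h <;> simp [h] at h0 h1
    have hsub : (Finset.univ.filter (fun i => y i = 0 ∨ y i = 1))ᶜ ⊂
        (Finset.univ.filter (fun i => x i = 0 ∨ x i = 1))ᶜ := by
      constructor
      · intro i hi
        simp only [Finset.mem_compl, Finset.mem_filter, Finset.mem_univ, true_and] at hi ⊢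
        intro hx
        have hwi : w i = 0 := hwz i hx
        have : y i = x i := by rw [hyi, hwi]; ring
        exact hi (this ▸ hx)
      · intro hsup
        have h1 : j₀ ∈ (Finset.univ.filter (fun i => x i = 0 ∨ x i = 1))ᶜ := by
          simp only [Finset.mem_compl, Finset.mem_filter, Finset.mem_univ, true_and]
          exact hj₀nt
        have h2 := hsup h1
        simp only [Finset.mem_compl, Finset.mem_filter, Finset.mem_univ, true_and] at h2
        exact h2 hj₀tight
    have hcard' : ((Finset.univ.filter (fun i => y i = 0 ∨ y i = 1))ᶜ).card ≤ n := by
      have := Finset.card_lt_card hsub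
      omega
    exact ih y hyV hyc hcard'

set_option maxHeartbeats 2000000 in
/-- For `k ≥ d/2`, every `k`-dimensional affine subspace meeting `[0,1]^d`
intersects `S` (a neighborhood of the `(d-k-1)`-skeleton) or `T`. -/
theorem subspace_intersects_skeleton_or_center (d k : ℕ) (hd : 2 ≤ d) (hk : d ≤ 2 * k)
    (V : AffineSubspace ℝ (EuclideanSpace ℝ (Fin d))) (hV : V ≠ ⊥)
    (hdim : finrank ℝ V.direction = k)
    (hmeet : ((V : Set (EuclideanSpace ℝ (Fin d))) ∩ unitCube d).Nonempty) :
    ((V : Set (EuclideanSpace ℝ (Fin d))) ∩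
        {x | x ∈ unitCube d ∧
          k + 1 ≤ {i : Fin d |
            x i ∈ Set.Icc (0 : ℝ) (1 / 20) ∪ Set.Icc (19 / 20 : ℝ) 1}.ncard}).Nonempty ∨
    ((V : Set (EuclideanSpace ℝ (Fin d))) ∩
        {x | (∀ i, x i ∈ Set.Icc (1 / 20 : ℝ) (19 / 20)) ∧
          {i : Fin d | x i ∈ Set.Icc (8 / 20 : ℝ) (14 / 20)}.ncard ≤ k}).Nonempty := by
  obtain ⟨p, hpV, hpc⟩ := hmeet
  by_cases hleft : ((V : Set (EuclideanSpace ℝ (Fin d))) ∩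
        {x | x ∈ unitCube d ∧
          k + 1 ≤ {i : Fin d |
            x i ∈ Set.Icc (0 : ℝ) (1 / 20) ∪ Set.Icc (19 / 20 : ℝ) 1}.ncard}).Nonempty
  · exact Or.inl hleft
  have hS' : ∀ x, x ∈ V → x ∈ unitCube d →
      {i : Fin d | x i ∈ Set.Icc (0:ℝ) (1/20) ∪ Set.Icc (19/20:ℝ) 1}.ncard ≤ k := by
    intro x hxV hxc
    by_contra hcon
    push_neg at hcon
    exact hleft ⟨x, hxV, hxc, hcon⟩
  obtain ⟨y, hyV, hyc, hker⟩ := exists_vertex_aux V d p hpV hpc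
    ((Finset.card_le_univ _).trans_eq (Fintype.card_fin d))
  set Z : Finset (Fin d) := Finset.univ.filter (fun i => y i = 0 ∨ y i = 1) with hZ
  have hZmem : ∀ i, i ∈ Z ↔ (y i = 0 ∨ y i = 1) := by
    intro i; simp [hZ]
  have hZB : (↑Z : Set (Fin d)) ⊆
      {i : Fin d | y i ∈ Set.Icc (0:ℝ) (1/20) ∪ Set.Icc (19/20:ℝ) 1} := by
    intro i hi
    have := (hZmem i).mp (Finset.mem_coe.mp hi)
    rcases this with h | h
    · left; rw [h]; constructor <;> norm_num
    · right; rw [h]; constructor <;> norm_num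
  have hZk : Z.card ≤ k := by
    have h := Set.ncard_le_ncard hZB (Set.toFinite _)
    rw [Set.ncard_coe_finset] at h
    exact h.trans (hS' y hyV hyc)
  let φ : V.direction →ₗ[ℝ] (↥Z → ℝ) :=
    { toFun := fun w i => (w : EuclideanSpace ℝ (Fin d)) i.1,
      map_add' := fun a b => rfl, map_smul' := fun c a => rfl }
  have hinj : Function.Injective φ := by
    rw [injective_iff_map_eq_zero]
    intro a ha
    have : (a : EuclideanSpace ℝ (Fin d)) = 0 := by
      apply hker a a.2
      intro i hi
      exact congrFun ha ⟨i, (hZmem i).mpr hi⟩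
    exact Subtype.ext this
  have hkZ : k ≤ Z.card := by
    have h := LinearMap.finrank_le_finrank_of_injective hinj
    rwa [hdim, Module.finrank_pi, Fintype.card_coe] at h
  have hZcard : Z.card = k := le_antisymm hZk hkZ
  have hsurj : Function.Surjective φ :=
    (LinearMap.injective_iff_surjective_of_finrank_eq_finrank
      (by rw [hdim, Module.finrank_pi, Fintype.card_coe, hZcard])).mp hinj
  obtain ⟨u', hu'⟩ := hsurj (fun i => if y i.1 = 0 then (1/5 : ℝ) else -(1/5))
  set u : EuclideanSpace ℝ (Fin d) := (u' : EuclideanSpace ℝ (Fin d)) with hu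
  have huZ : ∀ i (hi : i ∈ Z), u i = if y i = 0 then (1/5:ℝ) else -(1/5) := by
    intro i hi
    exact congrFun hu' ⟨i, hi⟩
  have hnotB : ∀ j, j ∉ Z → y j ∉ Set.Icc (0:ℝ) (1/20) ∪ Set.Icc (19/20:ℝ) 1 := by
    intro j hjZ hjB
    have hsubset : insert j (↑Z : Set (Fin d)) ⊆
        {i : Fin d | y i ∈ Set.Icc (0:ℝ) (1/20) ∪ Set.Icc (19/20:ℝ) 1} := by
      intro i hi
      rcases hi with rfl | hi
      · exact hjB
      · exact hZB hi
    have h1 : k + 1 ≤ {i : Fin d | y i ∈ Set.Icc (0:ℝ) (1/20) ∪ Set.Icc (19/20:ℝ) 1}.ncard := by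
      have hcard : (insert j (↑Z : Set (Fin d))).ncard = k + 1 := by
        rw [Set.ncard_insert_of_notMem (by simpa using hjZ), Set.ncard_coe_finset, hZcard]
      exact hcard ▸ Set.ncard_le_ncard hsubset (Set.toFinite _)
    have := hS' y hyV hyc
    omega
  have hinner : ∀ j, j ∉ Z → 1/20 < y j ∧ y j < 19/20 := by
    intro j hjZ
    have h := hnotB j hjZ
    have h01 := hyc j
    constructor
    · by_contra hc; push_neg at hc; exact h (Or.inl ⟨h01.1, hc⟩)
    · by_contra hc; push_neg at hc; exact h (Or.inr ⟨hc, h01.2⟩)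
  set F : Finset (Fin d) := Finset.univ.filter (fun j => j ∉ Z ∧ u j ≠ 0) with hFdef
  set q : Fin d → ℝ := fun j => if 0 < u j then (19/20 - y j) / u j else (1/20 - y j) / u j
    with hqdef
  set G : Finset ℝ := insert 1 (F.image q) with hGdef
  have hGne : G.Nonempty := ⟨1, Finset.mem_insert_self _ _⟩
  set s : ℝ := G.min' hGne with hsdef
  have hs1 : s ≤ 1 := Finset.min'_le _ _ (Finset.mem_insert_self _ _)
  have hq0 : ∀ j ∈ F, 0 ≤ q j := by
    intro j hjF
    obtain ⟨hjZ, hju⟩ : j ∉ Z ∧ u j ≠ 0 := by simpa [hFdef] using hjF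
    obtain ⟨hlo, hhi⟩ := hinner j hjZ
    by_cases hpos : 0 < u j
    · simp only [hqdef, if_pos hpos]
      exact div_nonneg (by linarith) hpos.le
    · have hneg : u j < 0 := lt_of_le_of_ne (not_lt.mp hpos) hju
      simp only [hqdef, if_neg hpos]
      rw [div_nonneg_iff]
      right
      constructor <;> nlinarith
  have hs0 : 0 ≤ s := by
    apply Finset.le_min'
    intro v hv
    rcases Finset.mem_insert.mp hv with rfl | hv
    · norm_num
    · obtain ⟨j, hjF, rfl⟩ := Finset.mem_image.mp hv
      exact hq0 j hjF
  set z : EuclideanSpace ℝ (Fin d) := y + s • u with hzdef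
  have hzi : ∀ i, z i = y i + s * u i := fun i => rfl
  have hzV : z ∈ V := by
    have hz : z = (s • u) +ᵥ y := by simp [hzdef, vadd_eq_add, add_comm]
    rw [hz]
    exact AffineSubspace.vadd_mem_of_mem_direction (Submodule.smul_mem _ _ u'.2) hyV
  have hzZ : ∀ i ∈ Z, z i = 1/5 * s ∨ z i = 1 - 1/5 * s := by
    intro i hi
    have h01 := (hZmem i).mp hi
    have hui := huZ i hi
    rcases h01 with h0 | h1
    · left; rw [hzi, h0, hui, if_pos h0]; ring
    · right
      have hne : y i ≠ 0 := by rw [h1]; norm_num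
      rw [hzi, h1, hui, if_neg hne]; ring
  have hzC : ∀ j, j ∉ Z → z j ∈ Set.Icc (1/20 : ℝ) (19/20) := by
    intro j hjZ
    obtain ⟨hlo, hhi⟩ := hinner j hjZ
    by_cases hju : u j = 0
    · rw [hzi, hju]
      simp only [mul_zero, add_zero]
      exact ⟨hlo.le, hhi.le⟩
    · have hjF : j ∈ F := by simp [hFdef, hjZ, hju]
      have hsq : s ≤ q j :=
        Finset.min'_le _ _ (Finset.mem_insert_of_mem (Finset.mem_image_of_mem q hjF))
      rw [hzi]
      by_cases hpos : 0 < u j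
      · have hqu : q j * u j = 19/20 - y j := by
          simp only [hqdef, if_pos hpos]
          exact div_mul_cancel₀ _ hju
        constructor
        · nlinarith
        · nlinarith [mul_le_mul_of_nonneg_right hsq hpos.le]
      · have hneg : u j < 0 := lt_of_le_of_ne (not_lt.mp hpos) hju
        have hqu : q j * u j = 1/20 - y j := by
          simp only [hqdef, if_neg hpos]
          exact div_mul_cancel₀ _ hju
        constructor
        · nlinarith
        · nlinarith
  have hsG : s ∈ G := Finset.min'_mem _ _
  clear_value z s u
  by_cases hquarter : 1/4 ≤ s
  · right
    refine ⟨z, hzV, ?_, ?_⟩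
    · intro i
      by_cases hiZ : i ∈ Z
      · rcases hzZ i hiZ with h | h
        · rw [h, Set.mem_Icc]
          constructor
          · linarith
          · linarith
        · rw [h, Set.mem_Icc]
          constructor
          · linarith
          · linarith
      · exact hzC i hiZ
    · have hsubM : {i : Fin d | z i ∈ Set.Icc (8/20:ℝ) (14/20)} ⊆ (↑(Zᶜ) : Set (Fin d)) := by
        intro i hi
        simp only [Finset.coe_compl, Set.mem_compl_iff, Finset.mem_coe]
        intro hiZ
        simp only [Set.mem_setOf_eq, Set.mem_Icc] at hi
        rcases hzZ i hiZ with h | h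
        · rw [h] at hi; linarith [hi.1]
        · rw [h] at hi; linarith [hi.2]
      calc {i : Fin d | z i ∈ Set.Icc (8/20:ℝ) (14/20)}.ncard
          ≤ (↑(Zᶜ) : Set (Fin d)).ncard := Set.ncard_le_ncard hsubM (Set.toFinite _)
        _ = (Zᶜ).card := Set.ncard_coe_finset _
        _ = d - k := by rw [Finset.card_compl, Fintype.card_fin, hZcard]
        _ ≤ k := by omega
  · left
    push_neg at hquarter
    have hsne1 : s ≠ 1 := by intro h; rw [h] at hquarter; norm_num at hquarter
    have hex : ∃ j₀ ∈ F, q j₀ = s := by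
      rcases Finset.mem_insert.mp hsG with h | h
      · exact absurd h hsne1
      · obtain ⟨j₀, hj₀F, hj₀⟩ := Finset.mem_image.mp h
        exact ⟨j₀, hj₀F, hj₀⟩
    obtain ⟨j₀, hj₀F, hj₀q⟩ := hex
    obtain ⟨hj₀Z, hj₀u⟩ : j₀ ∉ Z ∧ u j₀ ≠ 0 := by simpa [hFdef] using hj₀F
    have hj₀B : z j₀ ∈ Set.Icc (0:ℝ) (1/20) ∪ Set.Icc (19/20:ℝ) 1 := by
      rw [hzi, ← hj₀q]
      by_cases hpos : 0 < u j₀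
      · have hqu : q j₀ * u j₀ = 19/20 - y j₀ := by
          simp only [hqdef, if_pos hpos]
          exact div_mul_cancel₀ _ hj₀u
        right
        rw [Set.mem_Icc]
        constructor
        · nlinarith
        · nlinarith
      · have hneg : u j₀ < 0 := lt_of_le_of_ne (not_lt.mp hpos) hj₀u
        have hqu : q j₀ * u j₀ = 1/20 - y j₀ := by
          simp only [hqdef, if_neg hpos]
          exact div_mul_cancel₀ _ hj₀u
        left
        obtain ⟨hlo, hhi⟩ := hinner j₀ hj₀Z
        rw [Set.mem_Icc]
        constructor
        · nlinarith
        · nlinarith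
    refine ⟨z, hzV, ?_, ?_⟩
    · intro i
      by_cases hiZ : i ∈ Z
      · rcases hzZ i hiZ with h | h
        · rw [h, Set.mem_Icc]
          constructor
          · linarith
          · linarith
        · rw [h, Set.mem_Icc]
          constructor
          · linarith
          · linarith
      · have h := hzC i hiZ
        rw [Set.mem_Icc]
        constructor
        · linarith [h.1]
        · linarith [h.2]
    · have hsubset : insert j₀ (↑Z : Set (Fin d)) ⊆
          {i : Fin d | z i ∈ Set.Icc (0:ℝ) (1/20) ∪ Set.Icc (19/20:ℝ) 1} := by
        intro i hi
        rcases hi with rfl | hi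
        · exact hj₀B
        · have hiZ : i ∈ Z := Finset.mem_coe.mp hi
          rcases hzZ i hiZ with h | h
          · left
            rw [h, Set.mem_Icc]
            constructor
            · linarith
            · linarith
          · right
            rw [h, Set.mem_Icc]
            constructor
            · linarith
            · linarith
      calc k + 1 = (insert j₀ (↑Z : Set (Fin d))).ncard := by
            rw [Set.ncard_insert_of_notMem (by simpa using hj₀Z), Set.ncard_coe_finset, hZcard]
        _ ≤ _ := Set.ncard_le_ncard hsubset (Set.toFinite _)
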